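/- Let G be a finite simple bipartite graph in which every vertex has degree at most Δ_max, and let C(G) be a graph code of G over a finite field 𝔽_q (defined by nonzero coefficients a(v,e) at each vertex-incident-edge pair). Then C(G) has (3(Δ_max − 1), 3)-cooperative locality: for every set S of 3 edges there exists a set Γ of at most 3(Δ_max − 1) edges, disjoint from S, such that any two codewords of C(G) agreeing on all edges in Γ agree on all edges in S. -/

import Mathlib

open Finset

/-- Any edge of a graph has a vertex avoiding any other given `Sym2`. -/
lemma free_vertex_aux {V : Type*} {G : SimpleGraph V} {d f : Sym2 V}
    (hd : d ∈ G.edgeSet) (hne : d ≠ f) : ∃ v, v ∈ d ∧ v ∉ f := by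
  induction d with
  | _ a b =>
    have hab : a ≠ b := (G.mem_edgeSet.mp hd).ne
    by_cases haf : a ∈ f
    · by_cases hbf : b ∈ f
      · exact absurd ((Sym2.mem_and_mem_iff hab).mp ⟨haf, hbf⟩).symm hne
      · exact ⟨b, Sym2.mem_mk_right a b, hbf⟩
    · exact ⟨a, Sym2.mem_mk_left a b, haf⟩

lemma aux_no_free {V : Type*} [DecidableEq V] {G : SimpleGraph V} (hfree : G.CliqueFree 3)
    {e1 e2 e3 : Sym2 V} (h1 : e1 ∈ G.edgeSet) (h2 : e2 ∈ G.edgeSet) (h3 : e3 ∈ G.edgeSet)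
    (h12 : e1 ≠ e2) {a b : V} (he1 : e1 = s(a, b)) (ha2 : a ∈ e2) (hb3 : b ∈ e3)
    (h2free : ∀ v ∈ e2, v ∈ e1 ∨ v ∈ e3) : False := by
  subst he1
  have hab : G.Adj a b := G.mem_edgeSet.mp h1
  obtain ⟨c, hc⟩ := Sym2.mem_iff_exists.mp ha2
  subst hc
  have hac : G.Adj a c := G.mem_edgeSet.mp h2
  have hcb : c ≠ b := by rintro rfl; exact h12 rfl
  rcases h2free c (Sym2.mem_mk_right a c) with hc1 | hc3
  · rcases Sym2.mem_iff.mp hc1 with rfl | rfl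
    · exact hac.ne rfl
    · exact hcb rfl
  · have he3 : e3 = s(b, c) := (Sym2.mem_and_mem_iff hcb.symm).mp ⟨hb3, hc3⟩
    have hbc : G.Adj b c := G.mem_edgeSet.mp (he3 ▸ h3)
    exact hfree {a, b, c} (SimpleGraph.is3Clique_triple_iff.mpr ⟨hab, hac, hbc⟩)

/-- Among three distinct edges of a triangle-free graph, some edge has an endpoint
avoiding the other two edges. -/
lemma exists_free {V : Type*} [DecidableEq V] {G : SimpleGraph V} (hfree : G.CliqueFree 3)
    {e1 e2 e3 : Sym2 V} (h1 : e1 ∈ G.edgeSet) (h2 : e2 ∈ G.edgeSet) (h3 : e3 ∈ G.edgeSet)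
    (h12 : e1 ≠ e2) (h13 : e1 ≠ e3) (h23 : e2 ≠ e3) :
    (∃ v, v ∈ e1 ∧ v ∉ e2 ∧ v ∉ e3) ∨ (∃ v, v ∈ e2 ∧ v ∉ e1 ∧ v ∉ e3) ∨
      (∃ v, v ∈ e3 ∧ v ∉ e1 ∧ v ∉ e2) := by
  by_contra h
  push_neg at h
  obtain ⟨hf1, hf2, hf3⟩ := h
  have hg1 : ∀ v ∈ e1, v ∈ e2 ∨ v ∈ e3 := by
    intro v hv
    by_cases hv2 : v ∈ e2
    · exact Or.inl hv2
    · exact Or.inr (hf1 v hv hv2)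
  have hg2 : ∀ v ∈ e2, v ∈ e1 ∨ v ∈ e3 := by
    intro v hv
    by_cases hv1 : v ∈ e1
    · exact Or.inl hv1
    · exact Or.inr (hf2 v hv hv1)
  have hg3 : ∀ v ∈ e3, v ∈ e1 ∨ v ∈ e2 := by
    intro v hv
    by_cases hv1 : v ∈ e1
    · exact Or.inl hv1
    · exact Or.inr (hf3 v hv hv1)
  obtain ⟨a, b, hab⟩ : ∃ a b, e1 = s(a, b) := by
    induction e1 with
    | _ a b => exact ⟨a, b, rfl⟩
  have haneb : a ≠ b := by
    have := G.mem_edgeSet.mp (hab ▸ h1)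
    exact this.ne
  have ha : a ∈ e2 ∨ a ∈ e3 := hg1 a (by rw [hab]; exact Sym2.mem_mk_left a b)
  have hb : b ∈ e2 ∨ b ∈ e3 := hg1 b (by rw [hab]; exact Sym2.mem_mk_right a b)
  rcases ha with ha2 | ha3 <;> rcases hb with hb2 | hb3
  · exact h12 (hab.trans ((Sym2.mem_and_mem_iff haneb).mp ⟨ha2, hb2⟩).symm)
  · exact aux_no_free hfree h1 h2 h3 h12 hab ha2 hb3 hg2
  · exact aux_no_free hfree h1 h3 h2 h13 hab ha3 hb2 hg3
  · exact h13 (hab.trans ((Sym2.mem_and_mem_iff haneb).mp ⟨ha3, hb3⟩).symm)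

/-- a graph code of a finite simple bipartite graph with maximum degree at
most `Δmax` (defined by nonzero coefficients `a v e` at each vertex-incident-edge pair)
has `(3(Δmax − 1), 3)`-cooperative locality. -/
theorem stmt_6 {V : Type*} [Fintype V] [DecidableEq V]
    (G : SimpleGraph V) [DecidableRel G.Adj]
    (hbip : G.Colorable 2)
    (Δmax : ℕ) (hdeg : ∀ v : V, G.degree v ≤ Δmax)
    (F : Type*) [Field F] [Fintype F]
    (a : V → Sym2 V → F) (ha : ∀ v : V, ∀ e ∈ G.incidenceSet v, a v e ≠ 0)
    (Code : Set (G.edgeFinset → F))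
    (hCode : Code = {x | ∀ v : V,
      ∑ e : G.edgeFinset, (if v ∈ (e : Sym2 V) then a v (e : Sym2 V) * x e else 0) = 0})
    (S : Finset G.edgeFinset) (hS : S.card = 3) :
    ∃ Γ : Finset G.edgeFinset, Disjoint Γ S ∧ Γ.card ≤ 3 * (Δmax - 1) ∧
      ∀ x ∈ Code, ∀ y ∈ Code, (∀ e ∈ Γ, x e = y e) → ∀ e ∈ S, x e = y e := by
  classical
  have hfree : G.CliqueFree 3 := hbip.cliqueFree (by norm_num)
  have mem_es : ∀ e : G.edgeFinset, (e : Sym2 V) ∈ G.edgeSet := fun e =>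
    SimpleGraph.mem_edgeFinset.mp e.2
  -- the set of edges incident to a vertex, as a finset of code coordinates
  set A : V → Finset G.edgeFinset :=
    fun v => Finset.univ.filter (fun e : G.edgeFinset => v ∈ (e : Sym2 V)) with hA
  have cardA : ∀ v : V, (A v).card = G.degree v := by
    intro v
    rw [← SimpleGraph.card_incidenceFinset_eq_degree]
    apply Finset.card_bij (fun (e : G.edgeFinset) (_ : e ∈ A v) => (e : Sym2 V))
    · intro e he
      rw [SimpleGraph.mem_incidenceFinset]
      exact ⟨mem_es e, (Finset.mem_filter.mp he).2⟩
    · intro p hp q hq hpq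
      exact Subtype.ext hpq
    · intro f hf
      rw [SimpleGraph.mem_incidenceFinset] at hf
      exact ⟨⟨f, SimpleGraph.mem_edgeFinset.mpr hf.1⟩, Finset.mem_filter.mpr ⟨Finset.mem_univ _, hf.2⟩,
        rfl⟩
  -- main argument, given a good ordering of the three edges of S
  have main : ∀ f1 f2 f3 : G.edgeFinset, f1 ∈ S → f2 ∈ S → f3 ∈ S →
      (∀ e ∈ S, e = f1 ∨ e = f2 ∨ e = f3) → (f2 : Sym2 V) ≠ (f3 : Sym2 V) →
      ∀ v1 : V, v1 ∈ (f1 : Sym2 V) → v1 ∉ (f2 : Sym2 V) → v1 ∉ (f3 : Sym2 V) →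
      ∃ Γ : Finset G.edgeFinset, Disjoint Γ S ∧ Γ.card ≤ 3 * (Δmax - 1) ∧
        ∀ x ∈ Code, ∀ y ∈ Code, (∀ e ∈ Γ, x e = y e) → ∀ e ∈ S, x e = y e := by
    intro f1 f2 f3 hf1S hf2S hf3S hcover h23 v1 hv11 hv12 hv13
    obtain ⟨v2, hv22, hv23⟩ := free_vertex_aux (G := G) (mem_es f2) h23
    obtain ⟨v3, hv33, -⟩ := free_vertex_aux (G := G) (mem_es f3) h23.symm
    refine ⟨(A v1 ∪ A v2 ∪ A v3) \ S, Finset.sdiff_disjoint, ?_, ?_⟩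
    · -- cardinality bound
      have hsub : ∀ (v : V) (f : G.edgeFinset), f ∈ S → v ∈ (f : Sym2 V) →
          (A v \ S).card ≤ Δmax - 1 := by
        intro v f hfS hvf
        have hfA : f ∈ A v := Finset.mem_filter.mpr ⟨Finset.mem_univ _, hvf⟩
        have h1 : A v \ S ⊆ (A v).erase f := by
          intro e he
          rw [Finset.mem_sdiff] at he
          exact Finset.mem_erase.mpr ⟨fun h => he.2 (h ▸ hfS), he.1⟩
        calc (A v \ S).card ≤ ((A v).erase f).card := Finset.card_le_card h1
          _ = (A v).card - 1 := Finset.card_erase_of_mem hfA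
          _ ≤ Δmax - 1 := by
              have := (cardA v) ▸ hdeg v
              omega
      have hb1 := hsub v1 f1 hf1S hv11
      have hb2 := hsub v2 f2 hf2S hv22
      have hb3 := hsub v3 f3 hf3S hv33
      calc ((A v1 ∪ A v2 ∪ A v3) \ S).card
          = ((A v1 \ S) ∪ (A v2 \ S) ∪ (A v3 \ S)).card := by
            rw [Finset.union_sdiff_distrib, Finset.union_sdiff_distrib]
        _ ≤ (A v1 \ S).card + (A v2 \ S).card + (A v3 \ S).card := by
            refine le_trans (Finset.card_union_le _ _) ?_
            exact Nat.add_le_add_right (Finset.card_union_le _ _) _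
        _ ≤ 3 * (Δmax - 1) := by omega
    · -- recovery
      intro x hx y hy hΓ
      rw [hCode] at hx hy
      have key : ∀ (v : V) (f : G.edgeFinset), v ∈ (f : Sym2 V) →
          (∀ e : G.edgeFinset, v ∈ (e : Sym2 V) → e ≠ f → x e = y e) → x f = y f := by
        intro v f hvf hprev
        have hsum : ∑ e : G.edgeFinset,
            (if v ∈ (e : Sym2 V) then a v (e : Sym2 V) * (x e - y e) else 0) = 0 := by
          have hcongr : ∀ e : G.edgeFinset,
              (if v ∈ (e : Sym2 V) then a v (e : Sym2 V) * (x e - y e) else 0) =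
              (if v ∈ (e : Sym2 V) then a v (e : Sym2 V) * x e else 0) -
              (if v ∈ (e : Sym2 V) then a v (e : Sym2 V) * y e else 0) := by
            intro e; split_ifs <;> ring
          calc ∑ e : G.edgeFinset,
              (if v ∈ (e : Sym2 V) then a v (e : Sym2 V) * (x e - y e) else 0)
              = ∑ e : G.edgeFinset,
                ((if v ∈ (e : Sym2 V) then a v (e : Sym2 V) * x e else 0) -
                 (if v ∈ (e : Sym2 V) then a v (e : Sym2 V) * y e else 0)) :=
                Finset.sum_congr rfl (fun e _ => hcongr e)
            _ = (∑ e : G.edgeFinset, (if v ∈ (e : Sym2 V) then a v (e : Sym2 V) * x e else 0))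
                - ∑ e : G.edgeFinset, (if v ∈ (e : Sym2 V) then a v (e : Sym2 V) * y e else 0) :=
                Finset.sum_sub_distrib _ _
            _ = 0 := by rw [hx v, hy v, sub_zero]
        have hzero : ∀ e ∈ (Finset.univ : Finset G.edgeFinset), e ≠ f →
            (if v ∈ (e : Sym2 V) then a v (e : Sym2 V) * (x e - y e) else 0) = 0 := by
          intro e _ hef
          split_ifs with hve
          · rw [hprev e hve hef, sub_self, mul_zero]
          · rfl
        have hone : (if v ∈ (f : Sym2 V) then a v (f : Sym2 V) * (x f - y f) else 0) = 0 := by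
          rw [← Finset.sum_eq_single_of_mem f (Finset.mem_univ f) hzero]
          exact hsum
        rw [if_pos hvf] at hone
        have hane : a v (f : Sym2 V) ≠ 0 := ha v _ ⟨mem_es f, hvf⟩
        have := (mul_eq_zero.mp hone).resolve_left hane
        exact sub_eq_zero.mp this
      have hmemΓ : ∀ (e : G.edgeFinset), e ∉ S →
          (v1 ∈ (e : Sym2 V) ∨ v2 ∈ (e : Sym2 V) ∨ v3 ∈ (e : Sym2 V)) →
          x e = y e := by
        intro e heS hv
        apply hΓ
        rw [Finset.mem_sdiff, Finset.mem_union, Finset.mem_union]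
        refine ⟨?_, heS⟩
        rcases hv with h | h | h
        · exact Or.inl (Or.inl (Finset.mem_filter.mpr ⟨Finset.mem_univ _, h⟩))
        · exact Or.inl (Or.inr (Finset.mem_filter.mpr ⟨Finset.mem_univ _, h⟩))
        · exact Or.inr (Finset.mem_filter.mpr ⟨Finset.mem_univ _, h⟩)
      have k1 : x f1 = y f1 := by
        apply key v1 f1 hv11
        intro e hve hef
        by_cases heS : e ∈ S
        · rcases hcover e heS with rfl | rfl | rfl
          · exact absurd rfl hef
          · exact absurd hve hv12
          · exact absurd hve hv13
        · exact hmemΓ e heS (Or.inl hve)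
      have k2 : x f2 = y f2 := by
        apply key v2 f2 hv22
        intro e hve hef
        by_cases heS : e ∈ S
        · rcases hcover e heS with rfl | rfl | rfl
          · exact k1
          · exact absurd rfl hef
          · exact absurd hve hv23
        · exact hmemΓ e heS (Or.inr (Or.inl hve))
      have k3 : x f3 = y f3 := by
        apply key v3 f3 hv33
        intro e hve hef
        by_cases heS : e ∈ S
        · rcases hcover e heS with rfl | rfl | rfl
          · exact k1
          · exact k2
          · exact absurd rfl hef
        · exact hmemΓ e heS (Or.inr (Or.inr hve))
      intro e heS
      rcases hcover e heS with rfl | rfl | rfl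
      · exact k1
      · exact k2
      · exact k3
  -- extract the three edges of S and find a good ordering
  obtain ⟨e1, e2, e3, h12, h13, h23, hSeq⟩ := Finset.card_eq_three.mp hS
  have he1S : e1 ∈ S := by rw [hSeq]; simp
  have he2S : e2 ∈ S := by rw [hSeq]; simp
  have he3S : e3 ∈ S := by rw [hSeq]; simp
  have hcov : ∀ e ∈ S, e = e1 ∨ e = e2 ∨ e = e3 := by
    intro e he; rw [hSeq] at he; simpa using he
  have c12 : (e1 : Sym2 V) ≠ (e2 : Sym2 V) := fun h => h12 (Subtype.ext h)
  have c13 : (e1 : Sym2 V) ≠ (e3 : Sym2 V) := fun h => h13 (Subtype.ext h)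
  have c23 : (e2 : Sym2 V) ≠ (e3 : Sym2 V) := fun h => h23 (Subtype.ext h)
  rcases exists_free hfree (mem_es e1) (mem_es e2) (mem_es e3) c12 c13 c23 with
    ⟨v, hv1, hv2, hv3⟩ | ⟨v, hv2, hv1, hv3⟩ | ⟨v, hv3, hv1, hv2⟩
  · exact main e1 e2 e3 he1S he2S he3S hcov c23 v hv1 hv2 hv3
  · exact main e2 e1 e3 he2S he1S he3S
      (fun e he => ((hcov e he).elim (fun h => Or.inr (Or.inl h))
        (fun h => h.elim Or.inl (fun h => Or.inr (Or.inr h))))) c13 v hv2 hv1 hv3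
  · exact main e3 e1 e2 he3S he1S he2S
      (fun e he => ((hcov e he).elim (fun h => Or.inr (Or.inl h))
        (fun h => h.elim (fun h => Or.inr (Or.inr h)) Or.inl))) c12 v hv3 hv1 hv2
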